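/- arXiv:2004.00140 — 6 statements merged into one kernel-verified Lean document; each statement's English description precedes it below -/
import Mathlib

section
/- Let μ be a σ-finite measure on a measurable space Ω, and let p, q : Ω → ℝ be nonnegative measurable functions with ∫ p dμ = 1 and ∫ q dμ = 1. For every measurable D : Ω → ℝ with 0 < D(ω) < 1 for all ω, if the functions p·log D, q·log(1−D), p·log(p/(p+q)) and q·log(q/(p+q)) are μ-integrable (with the convention 0·log(0/0) = 0), then ∫ p·log D dμ + ∫ q·log(1−D) dμ ≤ ∫ p·log(p/(p+q)) dμ + ∫ q·log(q/(p+q)) dμ. In other words, the GAN value function is maximized over discriminators by the optimal discriminator D*(ω) = p(ω)/(p(ω)+q(ω)). -/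
open MeasureTheory

lemma gan_ptwise (a b t : ℝ) (ha : 0 ≤ a) (hb : 0 ≤ b) (ht0 : 0 < t) (ht1 : t < 1) :
    a * Real.log t + b * Real.log (1 - t) ≤
      a * Real.log (a / (a + b)) + b * Real.log (b / (a + b)) := by
  have h1t : 0 < 1 - t := by linarith
  rcases ha.eq_or_lt with h | hA
  · rcases hb.eq_or_lt with h' | hB
    · simp [← h, ← h']
    · -- a = 0
      have : b * Real.log (1 - t) ≤ 0 :=
        mul_nonpos_of_nonneg_of_nonpos hb (Real.log_nonpos (by linarith) (by linarith))
      have : b * Real.log (b / (0 + b)) = 0 := by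
        rw [zero_add, div_self hB.ne']; simp
      simp [← h, div_self hB.ne']
      exact mul_nonpos_of_nonneg_of_nonpos hb (Real.log_nonpos (le_of_lt h1t) (by linarith))
  · rcases hb.eq_or_lt with h' | hB
    · -- b = 0
      have hlt : a * Real.log t ≤ 0 :=
        mul_nonpos_of_nonneg_of_nonpos ha (Real.log_nonpos ht0.le ht1.le)
      have : a * Real.log (a / (a + 0)) = 0 := by
        rw [add_zero, div_self hA.ne']; simp
      simp [← h', div_self hA.ne']
      exact hlt
    · -- both positive
      have hab : 0 < a + b := by linarith
      have hA' : (0:ℝ) < a / (a + b) := by positivity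
      have hB' : (0:ℝ) < b / (a + b) := by positivity
      have k1 : Real.log (t / (a / (a + b))) ≤ t / (a / (a + b)) - 1 :=
        Real.log_le_sub_one_of_pos (by positivity)
      have k2 : Real.log ((1 - t) / (b / (a + b))) ≤ (1 - t) / (b / (a + b)) - 1 :=
        Real.log_le_sub_one_of_pos (by positivity)
      rw [Real.log_div ht0.ne' hA'.ne'] at k1
      rw [Real.log_div h1t.ne' hB'.ne'] at k2
      have e1 : t / (a / (a + b)) = t * (a + b) / a := by
        field_simp
      have e2 : (1 - t) / (b / (a + b)) = (1 - t) * (a + b) / b := by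
        field_simp
      rw [e1] at k1; rw [e2] at k2
      have m1 : a * (Real.log t - Real.log (a / (a + b))) ≤ t * (a + b) - a := by
        have := mul_le_mul_of_nonneg_left k1 ha
        have ha' : a * (t * (a + b) / a) = t * (a + b) := by field_simp
        nlinarith
      have m2 : b * (Real.log (1 - t) - Real.log (b / (a + b))) ≤ (1 - t) * (a + b) - b := by
        have := mul_le_mul_of_nonneg_left k2 hb
        have hb' : b * ((1 - t) * (a + b) / b) = (1 - t) * (a + b) := by field_simp
        nlinarith
      nlinarith

theorem gan_optimal_discriminator
    {Ω : Type*} [MeasurableSpace Ω] (μ : Measure Ω) [SigmaFinite μ]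
    (p q : Ω → ℝ) (hpm : Measurable p) (hqm : Measurable q)
    (hp0 : ∀ ω, 0 ≤ p ω) (hq0 : ∀ ω, 0 ≤ q ω)
    (hp1 : ∫ ω, p ω ∂μ = 1) (hq1 : ∫ ω, q ω ∂μ = 1)
    (D : Ω → ℝ) (hDm : Measurable D) (hD0 : ∀ ω, 0 < D ω) (hD1 : ∀ ω, D ω < 1)
    (h1 : Integrable (fun ω => p ω * Real.log (D ω)) μ)
    (h2 : Integrable (fun ω => q ω * Real.log (1 - D ω)) μ)
    (h3 : Integrable (fun ω => p ω * Real.log (p ω / (p ω + q ω))) μ)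
    (h4 : Integrable (fun ω => q ω * Real.log (q ω / (p ω + q ω))) μ) :
    ∫ ω, p ω * Real.log (D ω) ∂μ + ∫ ω, q ω * Real.log (1 - D ω) ∂μ ≤
      ∫ ω, p ω * Real.log (p ω / (p ω + q ω)) ∂μ +
      ∫ ω, q ω * Real.log (q ω / (p ω + q ω)) ∂μ := by
  rw [← integral_add h1 h2, ← integral_add h3 h4]
  exact integral_mono (h1.add h2) (h3.add h4) fun ω =>
    gan_ptwise (p ω) (q ω) (D ω) (hp0 ω) (hq0 ω) (hD0 ω) (hD1 ω)
end

section
/- Let μ be a σ-finite measure on a measurable space Ω, let p, q : Ω → ℝ be nonnegative measurable functions with ∫ p dμ = 1 and ∫ q dμ = 1, and let P and Q be the probability measures with densities p and q with respect to μ. If p·log(p/(p+q)) and q·log(q/(p+q)) are μ-integrable (with the convention 0·log(0/0) = 0), then ∫ p·log(p/(p+q)) dμ + ∫ q·log(q/(p+q)) dμ = −2·log 2 + 2·JSD(P, Q). -/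
open MeasureTheory ENNReal

/-- Kullback–Leibler divergence `KL(P ‖ M) = ∫ log (dP/dM) dP`. -/
noncomputable def klDiv {Ω : Type*} [MeasurableSpace Ω] (P M : Measure Ω) : ℝ :=
  ∫ ω, Real.log ((P.rnDeriv M ω).toReal) ∂P

/-- Jensen–Shannon divergence
`JSD(P, Q) = (1/2) KL(P ‖ M) + (1/2) KL(Q ‖ M)` with `M = (1/2) • (P + Q)`. -/
noncomputable def jsd {Ω : Type*} [MeasurableSpace Ω] (P Q : Measure Ω) : ℝ :=
  (1 / 2) * klDiv P ((1 / 2 : ℝ≥0∞) • (P + Q)) +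
  (1 / 2) * klDiv Q ((1 / 2 : ℝ≥0∞) • (P + Q))

lemma integrable_of_integral_eq_one' {Ω : Type*} [MeasurableSpace Ω] {μ : Measure Ω}
    {p : Ω → ℝ} (hp1 : ∫ ω, p ω ∂μ = 1) : Integrable p μ := by
  by_contra h
  rw [integral_undef h] at hp1; norm_num at hp1

lemma aux_kl {Ω : Type*} [MeasurableSpace Ω] (μ : Measure Ω) [SigmaFinite μ]
    (p q : Ω → ℝ) (hpm : Measurable p) (hqm : Measurable q)
    (hp0 : ∀ ω, 0 ≤ p ω) (hq0 : ∀ ω, 0 ≤ q ω)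
    (hp1 : ∫ ω, p ω ∂μ = 1) (hq1 : ∫ ω, q ω ∂μ = 1)
    (h3 : Integrable (fun ω => p ω * Real.log (p ω / (p ω + q ω))) μ) :
    klDiv (μ.withDensity fun ω => ENNReal.ofReal (p ω))
      ((1/2 : ℝ≥0∞) • ((μ.withDensity fun ω => ENNReal.ofReal (p ω))
          + μ.withDensity fun ω => ENNReal.ofReal (q ω)))
      = (∫ ω, p ω * Real.log (p ω / (p ω + q ω)) ∂μ) + Real.log 2 := by
  have hpInt : Integrable p μ := integrable_of_integral_eq_one' hp1
  have hqInt : Integrable q μ := integrable_of_integral_eq_one' hq1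
  set f : Ω → ℝ≥0∞ := fun ω => ENNReal.ofReal (p ω) with hfdef
  set g : Ω → ℝ≥0∞ := fun ω => ENNReal.ofReal (q ω) with hgdef
  have hf : Measurable f := hpm.ennreal_ofReal
  have hg : Measurable g := hqm.ennreal_ofReal
  set d : Ω → ℝ≥0∞ := fun ω => (1/2 : ℝ≥0∞) * (f ω + g ω) with hddef
  have hd : Measurable d := (hf.add hg).const_mul _
  have hM : (1/2 : ℝ≥0∞) • (μ.withDensity f + μ.withDensity g) = μ.withDensity d := by
    rw [← withDensity_add_left hf]
    exact (withDensity_smul (1/2) (hf.add hg)).symm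
  set h : Ω → ℝ≥0∞ := fun ω => f ω / d ω with hhdef
  have hh : Measurable h := hf.div hd
  have hdtop : ∀ ω, d ω ≠ ∞ := by
    intro ω
    simp only [hddef]
    exact ENNReal.mul_ne_top (by norm_num) (by simp [hfdef, hgdef])
  have hP : (μ.withDensity d).withDensity h = μ.withDensity f := by
    rw [← withDensity_mul _ hd hh]
    congr 1
    funext ω
    by_cases h0 : d ω = 0
    · have hf0 : f ω = 0 := by
        have := h0
        simp only [hddef, mul_eq_zero, add_eq_zero] at this
        rcases this with h | h
        · norm_num at h
        · exact h.1
      simp [hhdef, h0, hf0]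
    · exact ENNReal.mul_div_cancel h0 (hdtop ω)
  have hPf : ∫⁻ ω, f ω ∂μ = 1 := by
    rw [← ofReal_integral_eq_lintegral_ofReal hpInt (ae_of_all _ hp0), hp1, ENNReal.ofReal_one]
  have hQg : ∫⁻ ω, g ω ∂μ = 1 := by
    rw [← ofReal_integral_eq_lintegral_ofReal hqInt (ae_of_all _ hq0), hq1, ENNReal.ofReal_one]
  have hfin : IsFiniteMeasure (μ.withDensity d) := by
    constructor
    rw [withDensity_apply _ MeasurableSet.univ, setLIntegral_univ]
    have : ∫⁻ ω, d ω ∂μ = (1/2) * (∫⁻ ω, f ω ∂μ + ∫⁻ ω, g ω ∂μ) := by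
      rw [hddef]; beta_reduce; rw [lintegral_const_mul (f := fun ω => f ω + g ω) _ (hf.add hg), lintegral_add_left hf]
    rw [this, hPf, hQg]
    exact ENNReal.mul_lt_top (by norm_num) (by norm_num)
  have hrn : (μ.withDensity f).rnDeriv (μ.withDensity d) =ᵐ[μ.withDensity d] h := by
    rw [← hP]
    exact Measure.rnDeriv_withDensity _ hh
  have hac : μ.withDensity f ≪ μ.withDensity d := by
    rw [← hP]; exact withDensity_absolutelyContinuous _ _
  have hrnP : (μ.withDensity f).rnDeriv (μ.withDensity d) =ᵐ[μ.withDensity f] h :=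
    hrn.filter_mono hac.ae_le
  rw [klDiv, hM]
  have h1 : ∫ ω, Real.log (((μ.withDensity f).rnDeriv (μ.withDensity d) ω).toReal)
      ∂(μ.withDensity f) = ∫ ω, Real.log ((h ω).toReal) ∂(μ.withDensity f) :=
    integral_congr_ae (hrnP.mono fun ω hω => by simp only [hω])
  rw [h1]
  have hPnn : μ.withDensity f = μ.withDensity fun ω => ((p ω).toNNReal : ℝ≥0∞) := rfl
  rw [hPnn, integral_withDensity_eq_integral_smul hpm.real_toNNReal]
  have htoReal : ∀ ω, (h ω).toReal = p ω / ((1/2) * (p ω + q ω)) := by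
    intro ω
    rw [hhdef]
    simp only
    rw [ENNReal.toReal_div, hddef]
    simp only
    rw [ENNReal.toReal_mul, ENNReal.toReal_add (by simp [hfdef]) (by simp [hgdef])]
    simp [hfdef, hgdef, ENNReal.toReal_ofReal (hp0 ω), ENNReal.toReal_ofReal (hq0 ω)]
  have hpt : ∀ ω, (p ω).toNNReal • Real.log ((h ω).toReal)
      = p ω * Real.log (p ω / (p ω + q ω)) + p ω * Real.log 2 := by
    intro ω
    rw [NNReal.smul_def, smul_eq_mul, Real.coe_toNNReal _ (hp0 ω), htoReal ω]
    rcases eq_or_lt_of_le (hp0 ω) with h0 | h0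
    · simp [← h0]
    · have hpq : 0 < p ω + q ω := by linarith [hq0 ω]
      have : p ω / ((1/2) * (p ω + q ω)) = 2 * (p ω / (p ω + q ω)) := by
        field_simp
      rw [this, Real.log_mul two_ne_zero (div_ne_zero (ne_of_gt h0) (ne_of_gt hpq))]
      ring
  rw [integral_congr_ae (Filter.Eventually.of_forall hpt),
    integral_add h3 (hpInt.mul_const _), integral_mul_const, hp1, one_mul]

theorem optimal_value_eq_jsd
    {Ω : Type*} [MeasurableSpace Ω] (μ : Measure Ω) [SigmaFinite μ]
    (p q : Ω → ℝ) (hpm : Measurable p) (hqm : Measurable q)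
    (hp0 : ∀ ω, 0 ≤ p ω) (hq0 : ∀ ω, 0 ≤ q ω)
    (hp1 : ∫ ω, p ω ∂μ = 1) (hq1 : ∫ ω, q ω ∂μ = 1)
    (h3 : Integrable (fun ω => p ω * Real.log (p ω / (p ω + q ω))) μ)
    (h4 : Integrable (fun ω => q ω * Real.log (q ω / (p ω + q ω))) μ) :
    ∫ ω, p ω * Real.log (p ω / (p ω + q ω)) ∂μ +
      ∫ ω, q ω * Real.log (q ω / (p ω + q ω)) ∂μ =
    -2 * Real.log 2 +
      2 * jsd (μ.withDensity fun ω => ENNReal.ofReal (p ω))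
              (μ.withDensity fun ω => ENNReal.ofReal (q ω)) := by
  have e1 := aux_kl μ p q hpm hqm hp0 hq0 hp1 hq1 h3
  have h4' : Integrable (fun ω => q ω * Real.log (q ω / (q ω + p ω))) μ := by
    have : (fun ω => q ω * Real.log (q ω / (q ω + p ω)))
        = fun ω => q ω * Real.log (q ω / (p ω + q ω)) := by
      funext ω; rw [add_comm (q ω)]
    rw [this]; exact h4
  have e2 := aux_kl μ q p hqm hpm hq0 hp0 hq1 hp1 h4'
  rw [add_comm (μ.withDensity fun ω => ENNReal.ofReal (q ω))] at e2
  rw [show (∫ ω, q ω * Real.log (q ω / (q ω + p ω)) ∂μ)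
      = ∫ ω, q ω * Real.log (q ω / (p ω + q ω)) ∂μ from
    integral_congr_ae (Filter.Eventually.of_forall fun ω => by simp only []; rw [add_comm (q ω)])] at e2
  rw [jsd]
  linarith [e1, e2]
end

section
/- Let μ be a σ-finite measure on a measurable space Ω, let p, q : Ω → ℝ be nonnegative measurable functions with ∫ p dμ = 1 and ∫ q dμ = 1, let P and Q be the probability measures with densities p and q with respect to μ, and let M = (1/2)•(P + Q). Then KL(P ‖ M) = log 2 + ∫ p·log(p/(p+q)) dμ, where the integral is taken with the convention 0·log(0/0) = 0 and is assumed finite. -/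
open MeasureTheory ENNReal

theorem kl_to_mixture_eq
    {Ω : Type*} [MeasurableSpace Ω] (μ : Measure Ω) [SigmaFinite μ]
    (p q : Ω → ℝ) (hpm : Measurable p) (hqm : Measurable q)
    (hp0 : ∀ ω, 0 ≤ p ω) (hq0 : ∀ ω, 0 ≤ q ω)
    (hp1 : ∫ ω, p ω ∂μ = 1) (hq1 : ∫ ω, q ω ∂μ = 1)
    (hint : Integrable (fun ω => p ω * Real.log (p ω / (p ω + q ω))) μ) :
    klDiv (μ.withDensity fun ω => ENNReal.ofReal (p ω))
        ((1 / 2 : ℝ≥0∞) • ((μ.withDensity fun ω => ENNReal.ofReal (p ω)) +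
          (μ.withDensity fun ω => ENNReal.ofReal (q ω)))) =
      Real.log 2 + ∫ ω, p ω * Real.log (p ω / (p ω + q ω)) ∂μ := by
  -- integrability of p
  have hpInt : Integrable p μ := by
    by_contra h
    rw [integral_undef h] at hp1
    norm_num at hp1
  have hqInt : Integrable q μ := by
    by_contra h
    rw [integral_undef h] at hq1
    norm_num at hq1
  set fP : Ω → ℝ≥0∞ := fun ω => ENNReal.ofReal (p ω) with hfP
  set fQ : Ω → ℝ≥0∞ := fun ω => ENNReal.ofReal (q ω) with hfQ
  have hfPm : Measurable fP := hpm.ennreal_ofReal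
  have hfQm : Measurable fQ := hqm.ennreal_ofReal
  set g : Ω → ℝ≥0∞ := fun ω => (1 / 2 : ℝ≥0∞) * (fP ω + fQ ω) with hg
  have hgm : Measurable g := (hfPm.add hfQm).const_mul _
  set P : Measure Ω := μ.withDensity fP with hP
  set Q : Measure Ω := μ.withDensity fQ with hQ
  set M : Measure Ω := μ.withDensity g with hM
  have hMeq : (1 / 2 : ℝ≥0∞) • (P + Q) = M := by
    rw [hP, hQ, hM, ← withDensity_add_left hfPm,
      ← withDensity_smul' (1 / 2 : ℝ≥0∞) (fP + fQ) (by norm_num)]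
    congr 1
  -- M is a finite measure
  have hPfin : P Set.univ = 1 := by
    rw [hP, withDensity_apply _ MeasurableSet.univ, Measure.restrict_univ,
      ← ofReal_integral_eq_lintegral_ofReal hpInt (ae_of_all _ hp0), hp1, ENNReal.ofReal_one]
  have hQfin : Q Set.univ = 1 := by
    rw [hQ, withDensity_apply _ MeasurableSet.univ, Measure.restrict_univ,
      ← ofReal_integral_eq_lintegral_ofReal hqInt (ae_of_all _ hq0), hq1, ENNReal.ofReal_one]
  have hMfin : IsFiniteMeasure M := by
    constructor
    rw [← hMeq]
    simp [hPfin, hQfin]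
  have : SigmaFinite M := hMfin.toSigmaFinite
  set h : Ω → ℝ≥0∞ := fun ω => fP ω / g ω with hh
  have hhm : Measurable h := hfPm.div hgm
  -- P = M.withDensity h
  have hPM : M.withDensity h = P := by
    rw [hM, ← withDensity_mul _ hgm hhm, hP]
    congr 1
    funext ω
    by_cases h0 : g ω = 0
    · have hp : fP ω = 0 := by
        have := h0
        simp only [hg, mul_eq_zero, add_eq_zero] at this
        rcases this with h' | h'
        · norm_num at h'
        · exact h'.1
      simp [Pi.mul_apply, hh, h0, hp]
    · have hfin : g ω ≠ ∞ :=
        ENNReal.mul_ne_top (by norm_num)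
          (ENNReal.add_ne_top.2 ⟨ENNReal.ofReal_ne_top, ENNReal.ofReal_ne_top⟩)
      simp only [Pi.mul_apply, hh]
      exact ENNReal.mul_div_cancel h0 hfin
  have hrn : P.rnDeriv M =ᵐ[M] h := by
    rw [← hPM]
    exact Measure.rnDeriv_withDensity M hhm
  have hPac : P ≪ M := hPM ▸ withDensity_absolutelyContinuous M h
  have hrnP : P.rnDeriv M =ᵐ[P] h := hPac.ae_le hrn
  rw [hMeq, klDiv]
  have h1 : ∫ ω, Real.log ((P.rnDeriv M ω).toReal) ∂P
      = ∫ ω, Real.log ((h ω).toReal) ∂P :=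
    integral_congr_ae (hrnP.mono fun ω hω => by simp only [hω])
  rw [h1]
  -- unfold P as withDensity to get an integral over μ
  have h2 : ∫ ω, Real.log ((h ω).toReal) ∂P
      = ∫ ω, p ω * Real.log ((h ω).toReal) ∂μ := by
    have : P = μ.withDensity (fun ω => ((p ω).toNNReal : ℝ≥0∞)) := by
      rw [hP]; rfl
    rw [this, integral_withDensity_eq_integral_smul hpm.real_toNNReal]
    refine integral_congr_ae (ae_of_all _ fun ω => ?_)
    simp [NNReal.smul_def, Real.coe_toNNReal _ (hp0 ω)]
  rw [h2]
  -- pointwise identity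
  have h3 : ∀ ω, p ω * Real.log ((h ω).toReal)
      = p ω * Real.log 2 + p ω * Real.log (p ω / (p ω + q ω)) := by
    intro ω
    by_cases hp : p ω = 0
    · simp [hp]
    · have hppos : 0 < p ω := lt_of_le_of_ne (hp0 ω) (Ne.symm hp)
      have hspos : 0 < p ω + q ω := by linarith [hq0 ω]
      have htr : (h ω).toReal = 2 * (p ω / (p ω + q ω)) := by
        simp only [hh, hg, hfP, hfQ]
        rw [ENNReal.toReal_div, ENNReal.toReal_mul, ENNReal.toReal_add (by finiteness) (by finiteness),
          ENNReal.toReal_ofReal (hp0 ω), ENNReal.toReal_ofReal (hq0 ω)]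
        have : (1 / 2 : ℝ≥0∞).toReal = 1 / 2 := by simp
        rw [this]
        field_simp
      rw [htr, Real.log_mul (by norm_num) (by positivity), mul_add]
  rw [integral_congr_ae (ae_of_all _ h3), integral_add (hpInt.mul_const _) hint,
    integral_mul_const, hp1, one_mul]
end

section
/- Let P be a probability measure on a measurable space Ω. For every measurable D : Ω → ℝ with 0 < D(ω) < 1 for all ω such that log D and log(1 − D) are P-integrable, we have ∫ log D dP + ∫ log(1 − D) dP ≤ −2·log 2, with equality when D is the constant 1/2. That is, when the generated distribution equals the data distribution, the optimal discriminator value is −2·log 2, attained by D ≡ 1/2. -/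
open MeasureTheory

theorem equal_distributions_optimal_value
    {Ω : Type*} [MeasurableSpace Ω] (P : Measure Ω) [IsProbabilityMeasure P]
    (D : Ω → ℝ) (hDm : Measurable D) (hD0 : ∀ ω, 0 < D ω) (hD1 : ∀ ω, D ω < 1)
    (h1 : Integrable (fun ω => Real.log (D ω)) P)
    (h2 : Integrable (fun ω => Real.log (1 - D ω)) P) :
    (∫ ω, Real.log (D ω) ∂P + ∫ ω, Real.log (1 - D ω) ∂P ≤ -2 * Real.log 2) ∧
    ((∀ ω, D ω = 1 / 2) →
      ∫ ω, Real.log (D ω) ∂P + ∫ ω, Real.log (1 - D ω) ∂P = -2 * Real.log 2) := by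
  have key : ∀ ω, Real.log (D ω) + Real.log (1 - D ω) ≤ -2 * Real.log 2 := by
    intro ω
    have h0 := hD0 ω
    have h1' := hD1 ω
    have hpos : 0 < 1 - D ω := by linarith
    rw [← Real.log_mul (ne_of_gt h0) (ne_of_gt hpos)]
    have hle : D ω * (1 - D ω) ≤ 1 / 4 := by nlinarith [sq_nonneg (D ω - 1 / 2)]
    calc Real.log (D ω * (1 - D ω)) ≤ Real.log (1 / 4) :=
          Real.log_le_log (by positivity) hle
      _ = -2 * Real.log 2 := by
          rw [show (1 / 4 : ℝ) = 2 ^ (-2 : ℤ) by norm_num, Real.log_zpow]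
          push_cast; ring
  constructor
  · calc ∫ ω, Real.log (D ω) ∂P + ∫ ω, Real.log (1 - D ω) ∂P
        = ∫ ω, (Real.log (D ω) + Real.log (1 - D ω)) ∂P := (integral_add h1 h2).symm
      _ ≤ ∫ _ω, (-2 * Real.log 2) ∂P := by
          refine integral_mono (h1.add h2) (integrable_const _) key
      _ = -2 * Real.log 2 := by simp
  · intro h
    have hD : D = fun _ => (1 : ℝ) / 2 := funext h
    subst hD
    simp only []
    rw [integral_const, integral_const]
    simp only [measure_univ, probReal_univ, ENNReal.toReal_one, smul_eq_mul, one_mul]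
    rw [show (1 : ℝ) - 1 / 2 = 1 / 2 by norm_num,
      show (1 : ℝ) / 2 = 2⁻¹ by norm_num, Real.log_inv]
    ring
end

section
/- Let μ be a σ-finite measure on a measurable space Ω, let p, q : Ω → ℝ be nonnegative measurable functions with ∫ p dμ = 1 and ∫ q dμ = 1, and let P and Q be the probability measures with densities p and q with respect to μ. Assume p·log(p/(p+q)) and q·log(q/(p+q)) are μ-integrable (convention 0·log(0/0) = 0). Then the supremum, over all measurable D : Ω → (0,1) for which p·log D and q·log(1−D) are μ-integrable, of ∫ p·log D dμ + ∫ q·log(1−D) dμ equals −2·log 2 + 2·JSD(P, Q). -/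
open MeasureTheory ENNReal

section Aux

variable {Ω : Type*} [MeasurableSpace Ω]

/-- Basic log inequality: for `a ≥ 0`, `s, c > 0`, `a log s ≤ a log (a/c) + (s c - a)`. -/
lemma aux_log_le {a s c : ℝ} (ha : 0 ≤ a) (hs : 0 < s) (hc : 0 < c) :
    a * Real.log s ≤ a * Real.log (a / c) + (s * c - a) := by
  rcases ha.eq_or_lt with h | h
  · simpa [← h] using (mul_pos hs hc).le
  · have h1 : Real.log (s * c / a) ≤ s * c / a - 1 :=
      Real.log_le_sub_one_of_pos (by positivity)
    have h2 : Real.log (s * c / a) = Real.log s - Real.log (a / c) := by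
      rw [Real.log_div (by positivity) h.ne', Real.log_mul hs.ne' hc.ne',
        Real.log_div h.ne' hc.ne']
      ring
    have h3 := mul_le_mul_of_nonneg_left h1 ha
    rw [h2] at h3
    have h4 : a * (s * c / a - 1) = s * c - a := by field_simp
    rw [h4] at h3
    linarith [h3]

/-- Pointwise optimality of `a/(a+b)`. -/
lemma aux_sup {a b t : ℝ} (ha : 0 ≤ a) (hb : 0 ≤ b) (ht0 : 0 < t) (ht1 : t < 1) :
    a * Real.log t + b * Real.log (1 - t) ≤
      a * Real.log (a / (a + b)) + b * Real.log (b / (a + b)) := by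
  rcases (add_nonneg ha hb).eq_or_lt with h | h
  · have ha0 : a = 0 := by linarith
    have hb0 : b = 0 := by linarith
    simp [ha0, hb0]
  · have k1 := aux_log_le ha ht0 h
    have k2 := aux_log_le hb (by linarith : (0:ℝ) < 1 - t) h
    linarith

/-- Approximate optimal discriminator. -/
noncomputable def Dfun (p q : Ω → ℝ) (t : ℝ) (ω : Ω) : ℝ :=
  if p ω + q ω = 0 then 1 / 2
  else ((1 - t) * p ω + t * (p ω + q ω) / 2) / (p ω + q ω)

lemma Dfun_measurable {p q : Ω → ℝ} (hpm : Measurable p) (hqm : Measurable q) (t : ℝ) :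
    Measurable (Dfun p q t) := by
  unfold Dfun
  exact Measurable.ite (measurableSet_eq_fun (hpm.add hqm) measurable_const)
    measurable_const ((((hpm.const_mul _).add (((hpm.add hqm).const_mul _).div_const _)).div
      (hpm.add hqm)))

lemma Dfun_eq_of_pos {p q : Ω → ℝ} {t : ℝ} {ω : Ω}
    (h : 0 < p ω + q ω) :
    Dfun p q t ω = (1 - t) * (p ω / (p ω + q ω)) + t * (1 / 2) := by
  rw [Dfun, if_neg h.ne']
  rw [div_eq_iff h.ne']
  field_simp

lemma Dfun_bounds {p q : Ω → ℝ} {t : ℝ} (hp0 : ∀ ω, 0 ≤ p ω) (hq0 : ∀ ω, 0 ≤ q ω)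
    (ht0 : 0 < t) (ht1 : t ≤ 1) (ω : Ω) :
    t / 2 ≤ Dfun p q t ω ∧ Dfun p q t ω ≤ 1 - t / 2 := by
  rcases (add_nonneg (hp0 ω) (hq0 ω)).eq_or_lt with h | h
  · rw [Dfun, if_pos h.symm]
    constructor <;> linarith
  · rw [Dfun_eq_of_pos h]
    have hs1 : 0 ≤ p ω / (p ω + q ω) := div_nonneg (hp0 ω) h.le
    have hs2 : p ω / (p ω + q ω) ≤ 1 := by
      rw [div_le_one h]; linarith [hq0 ω]
    constructor <;> nlinarith

lemma Dfun_symm {p q : Ω → ℝ} {t : ℝ} (ω : Ω) :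
    1 - Dfun p q t ω = Dfun q p t ω := by
  unfold Dfun
  rcases eq_or_ne (p ω + q ω) 0 with h | h
  · rw [if_pos h, if_pos (by linarith [h] : q ω + p ω = 0)]
    norm_num
  · have h' : q ω + p ω ≠ 0 := fun hc => h (by linarith)
    rw [if_neg h, if_neg h']
    field_simp
    ring

/-- Pointwise concavity bound. -/
lemma Dfun_log_bound {p q : Ω → ℝ} {t : ℝ} (hp0 : ∀ ω, 0 ≤ p ω) (hq0 : ∀ ω, 0 ≤ q ω)
    (ht0 : 0 < t) (ht1 : t ≤ 1) (ω : Ω) :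
    (1 - t) * (p ω * Real.log (p ω / (p ω + q ω))) - t * Real.log 2 * p ω ≤
      p ω * Real.log (Dfun p q t ω) := by
  rcases (hp0 ω).eq_or_lt with h | h
  · simp [← h]
  · have hpq : 0 < p ω + q ω := by linarith [hq0 ω]
    have hD : Dfun p q t ω = (1 - t) * (p ω / (p ω + q ω)) + t * (1 / 2) :=
      Dfun_eq_of_pos hpq
    have hmem1 : p ω / (p ω + q ω) ∈ Set.Ioi (0 : ℝ) := by
      exact Set.mem_Ioi.2 (by positivity)
    have hmem2 : (1 / 2 : ℝ) ∈ Set.Ioi (0 : ℝ) := by norm_num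
    have hconc := strictConcaveOn_log_Ioi.concaveOn.2 hmem1 hmem2
      (by linarith : (0:ℝ) ≤ 1 - t) ht0.le (by ring)
    simp only [smul_eq_mul] at hconc
    rw [← hD] at hconc
    have hlog : Real.log (1 / 2 : ℝ) = -Real.log 2 := by
      rw [one_div, Real.log_inv]
    rw [hlog] at hconc
    have := mul_le_mul_of_nonneg_left hconc (hp0 ω)
    nlinarith [this]

lemma Dfun_log_integrable {p q : Ω → ℝ} {t : ℝ} {μ : Measure Ω}
    (hpm : Measurable p) (hqm : Measurable q)
    (hp0 : ∀ ω, 0 ≤ p ω) (hq0 : ∀ ω, 0 ≤ q ω)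
    (ht0 : 0 < t) (ht1 : t ≤ 1) (hintp : Integrable p μ) :
    Integrable (fun ω => p ω * Real.log (Dfun p q t ω)) μ := by
  have hb := Dfun_bounds hp0 hq0 ht0 ht1 (p := p) (q := q)
  refine (hintp.const_mul |Real.log (t/2)|).mono ?_ (ae_of_all _ fun ω => ?_)
  · exact ((hpm.mul ((Dfun_measurable hpm hqm t).log)).aestronglyMeasurable)
  · have h1 : 0 < t / 2 := by linarith
    have h2 : t / 2 ≤ Dfun p q t ω := (hb ω).1
    have h3 : Dfun p q t ω ≤ 1 := by linarith [(hb ω).2]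
    have hl1 : Real.log (t/2) ≤ Real.log (Dfun p q t ω) :=
      Real.log_le_log h1 h2
    have hl2 : Real.log (Dfun p q t ω) ≤ 0 :=
      Real.log_nonpos (by linarith) h3
    have this : |Real.log (Dfun p q t ω)| ≤ |Real.log (t/2)| := by
      rw [abs_of_nonpos hl2]
      calc -Real.log (Dfun p q t ω) ≤ -Real.log (t/2) := by linarith
        _ ≤ |Real.log (t/2)| := neg_le_abs _
    have e1 : ‖p ω * Real.log (Dfun p q t ω)‖ = p ω * |Real.log (Dfun p q t ω)| := by
      rw [norm_mul, Real.norm_eq_abs, Real.norm_eq_abs, abs_of_nonneg (hp0 ω)]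
    have e2 : ‖|Real.log (t/2)| * p ω‖ = |Real.log (t/2)| * p ω := by
      rw [norm_mul, Real.norm_eq_abs, Real.norm_eq_abs, abs_abs, abs_of_nonneg (hp0 ω)]
    rw [e1, e2, mul_comm (|Real.log (t/2)|)]
    exact mul_le_mul_of_nonneg_left this (hp0 ω)

/-- Integral lower bound for one side. -/
lemma Dfun_integral_bound {p q : Ω → ℝ} {t : ℝ} {μ : Measure Ω}
    (hpm : Measurable p) (hqm : Measurable q)
    (hp0 : ∀ ω, 0 ≤ p ω) (hq0 : ∀ ω, 0 ≤ q ω)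
    (ht0 : 0 < t) (ht1 : t ≤ 1) (hintp : Integrable p μ)
    (hp1 : ∫ ω, p ω ∂μ = 1)
    (h3 : Integrable (fun ω => p ω * Real.log (p ω / (p ω + q ω))) μ) :
    (1 - t) * (∫ ω, p ω * Real.log (p ω / (p ω + q ω)) ∂μ) - t * Real.log 2 ≤
      ∫ ω, p ω * Real.log (Dfun p q t ω) ∂μ := by
  have hI : Integrable (fun ω => (1 - t) * (p ω * Real.log (p ω / (p ω + q ω)))
      - t * Real.log 2 * p ω) μ := (h3.const_mul _).sub (hintp.const_mul _)
  have hmono := integral_mono hI (Dfun_log_integrable hpm hqm hp0 hq0 ht0 ht1 hintp)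
    (fun ω => Dfun_log_bound hp0 hq0 ht0 ht1 ω)
  rw [integral_sub (h3.const_mul _) (hintp.const_mul _), integral_const_mul,
    integral_const_mul, hp1, mul_one] at hmono
  exact hmono

/-- Computation of the KL divergence term. -/
lemma klDiv_withDensity_aux (μ : Measure Ω) [SigmaFinite μ]
    (p q : Ω → ℝ) (hpm : Measurable p) (hqm : Measurable q)
    (hp0 : ∀ ω, 0 ≤ p ω) (hq0 : ∀ ω, 0 ≤ q ω)
    (hintp : Integrable p μ) (hintq : Integrable q μ)
    (hp1 : ∫ ω, p ω ∂μ = 1)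
    (h3 : Integrable (fun ω => p ω * Real.log (p ω / (p ω + q ω))) μ) :
    klDiv (μ.withDensity fun ω => ENNReal.ofReal (p ω))
      ((1 / 2 : ℝ≥0∞) • (μ.withDensity (fun ω => ENNReal.ofReal (p ω)) +
        μ.withDensity fun ω => ENNReal.ofReal (q ω))) =
      Real.log 2 + ∫ ω, p ω * Real.log (p ω / (p ω + q ω)) ∂μ := by
  set P := μ.withDensity fun ω => ENNReal.ofReal (p ω) with hPdef
  set Q := μ.withDensity fun ω => ENNReal.ofReal (q ω) with hQdef
  set M := (1 / 2 : ℝ≥0∞) • (P + Q) with hMdef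
  have hgm : Measurable (fun ω => ENNReal.ofReal ((p ω + q ω) / 2)) :=
    ((hpm.add hqm).div_const 2).ennreal_ofReal
  -- M as a withDensity
  have hM : M = μ.withDensity (fun ω => ENNReal.ofReal ((p ω + q ω) / 2)) := by
    rw [hMdef, hPdef, hQdef, ← withDensity_add_left hpm.ennreal_ofReal,
      ← withDensity_smul' _ _ (by norm_num : (1/2 : ℝ≥0∞) ≠ ∞)]
    congr 1
    funext ω
    simp only [Pi.smul_apply, Pi.add_apply, smul_eq_mul]
    rw [← ENNReal.ofReal_add (hp0 ω) (hq0 ω),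
      ENNReal.ofReal_div_of_pos (by norm_num : (0:ℝ) < 2), ENNReal.ofReal_ofNat,
      one_div, ENNReal.div_eq_inv_mul]
  -- M is a finite measure
  have hIsum : Integrable (fun ω => (p ω + q ω) / 2) μ := by
    exact (hintp.add hintq).div_const 2
  have hMfin : IsFiniteMeasure M := by
    rw [hM]
    refine isFiniteMeasure_withDensity ?_
    have heq := ofReal_integral_eq_lintegral_ofReal hIsum
      (ae_of_all _ fun ω => div_nonneg (add_nonneg (hp0 ω) (hq0 ω)) (by norm_num))
    rw [← heq]
    exact ENNReal.ofReal_ne_top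
  have hMsf : SigmaFinite M := hMfin.toSigmaFinite
  -- the density of P with respect to M
  set h : Ω → ℝ≥0∞ := fun ω => ENNReal.ofReal (2 * p ω / (p ω + q ω)) with hhdef
  have hhm : Measurable h := ((hpm.const_mul 2).div (hpm.add hqm)).ennreal_ofReal
  have hPM : P = M.withDensity h := by
    rw [hM, hPdef, ← withDensity_mul _ hgm hhm]
    congr 1
    funext ω
    simp only [Pi.mul_apply, hhdef]
    rw [← ENNReal.ofReal_mul (div_nonneg (add_nonneg (hp0 ω) (hq0 ω)) (by norm_num))]
    congr 1
    rcases (add_nonneg (hp0 ω) (hq0 ω)).eq_or_lt with h0 | h0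
    · have hpz : p ω = 0 := by have := hp0 ω; have := hq0 ω; linarith
      have hqz : q ω = 0 := by have := hp0 ω; have := hq0 ω; linarith
      rw [hpz, hqz]
      norm_num
    · field_simp
  have hPabs : P ≪ M := by
    have h2M : (2 : ℝ≥0∞) * (1 / 2 : ℝ≥0∞) = 1 := by
      rw [one_div, ENNReal.mul_inv_cancel (by norm_num) (by norm_num)]
    have h1 : P ≤ (2 : ℝ≥0∞) • M := by
      rw [hMdef, smul_smul, h2M, one_smul]
      exact Measure.le_add_right le_rfl
    exact Measure.absolutelyContinuous_of_le_smul h1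
  have hrn : P.rnDeriv M =ᵐ[M] h := by
    rw [hPM]
    exact Measure.rnDeriv_withDensity M hhm
  have hrnP : ∀ᵐ ω ∂P, P.rnDeriv M ω = h ω := hPabs.ae_le hrn
  have step1 : klDiv P M = ∫ ω, Real.log ((h ω).toReal) ∂P := by
    refine integral_congr_ae ?_
    filter_upwards [hrnP] with ω hω
    rw [hω]
  -- unfold the withDensity integral
  have step2 : ∫ ω, Real.log ((h ω).toReal) ∂P
      = ∫ ω, p ω * Real.log ((h ω).toReal) ∂μ := by
    rw [hPdef]
    have : (fun ω => ENNReal.ofReal (p ω)) = fun ω => ((p ω).toNNReal : ℝ≥0∞) := rfl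
    rw [this, integral_withDensity_eq_integral_smul hpm.real_toNNReal]
    refine integral_congr_ae (ae_of_all _ fun ω => ?_)
    simp [NNReal.smul_def, Real.coe_toNNReal _ (hp0 ω)]
  have step3 : ∀ ω, p ω * Real.log ((h ω).toReal)
      = p ω * Real.log 2 + p ω * Real.log (p ω / (p ω + q ω)) := by
    intro ω
    have htr : (h ω).toReal = 2 * p ω / (p ω + q ω) := by
      rw [hhdef, ENNReal.toReal_ofReal
        (by have := hp0 ω; have := add_nonneg (hp0 ω) (hq0 ω); positivity)]
    rw [htr]
    rcases (hp0 ω).eq_or_lt with h0 | h0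
    · rw [← h0]; simp
    · have hpq : 0 < p ω + q ω := by linarith [hq0 ω]
      rw [show 2 * p ω / (p ω + q ω) = 2 * (p ω / (p ω + q ω)) by ring,
        Real.log_mul (by norm_num) (by positivity)]
      ring
  have step4 : ∫ ω, p ω * Real.log ((h ω).toReal) ∂μ
      = Real.log 2 + ∫ ω, p ω * Real.log (p ω / (p ω + q ω)) ∂μ := by
    rw [integral_congr_ae (ae_of_all _ step3),
      integral_add (hintp.mul_const _) h3, integral_mul_const, hp1, one_mul]
  exact step1.trans (step2.trans step4)

end Aux

theorem gan_sup_value_eq_jsd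
    {Ω : Type*} [MeasurableSpace Ω] (μ : Measure Ω) [SigmaFinite μ]
    (p q : Ω → ℝ) (hpm : Measurable p) (hqm : Measurable q)
    (hp0 : ∀ ω, 0 ≤ p ω) (hq0 : ∀ ω, 0 ≤ q ω)
    (hp1 : ∫ ω, p ω ∂μ = 1) (hq1 : ∫ ω, q ω ∂μ = 1)
    (h3 : Integrable (fun ω => p ω * Real.log (p ω / (p ω + q ω))) μ)
    (h4 : Integrable (fun ω => q ω * Real.log (q ω / (p ω + q ω))) μ) :
    IsLUB
      {r : ℝ | ∃ D : Ω → ℝ, Measurable D ∧ (∀ ω, 0 < D ω ∧ D ω < 1) ∧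
        Integrable (fun ω => p ω * Real.log (D ω)) μ ∧
        Integrable (fun ω => q ω * Real.log (1 - D ω)) μ ∧
        r = ∫ ω, p ω * Real.log (D ω) ∂μ + ∫ ω, q ω * Real.log (1 - D ω) ∂μ}
      (-2 * Real.log 2 +
        2 * jsd (μ.withDensity fun ω => ENNReal.ofReal (p ω))
                (μ.withDensity fun ω => ENNReal.ofReal (q ω))) := by
  have hintp : Integrable p μ := by
    by_contra h
    rw [integral_undef h] at hp1
    norm_num at hp1
  have hintq : Integrable q μ := by
    by_contra h
    rw [integral_undef h] at hq1
    norm_num at hq1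
  have h4' : Integrable (fun ω => q ω * Real.log (q ω / (q ω + p ω))) μ := by
    have : (fun ω => q ω * Real.log (q ω / (q ω + p ω)))
        = fun ω => q ω * Real.log (q ω / (p ω + q ω)) := by
      funext ω; rw [add_comm (q ω)]
    rw [this]; exact h4
  have hKLP := klDiv_withDensity_aux μ p q hpm hqm hp0 hq0 hintp hintq hp1 h3
  have hKLQ0 := klDiv_withDensity_aux μ q p hqm hpm hq0 hp0 hintq hintp hq1 h4'
  rw [add_comm (μ.withDensity fun ω => ENNReal.ofReal (q ω))] at hKLQ0
  have hBcongr : ∫ ω, q ω * Real.log (q ω / (q ω + p ω)) ∂μ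
      = ∫ ω, q ω * Real.log (q ω / (p ω + q ω)) ∂μ :=
    integral_congr_ae (ae_of_all _ fun ω => by
      show q ω * Real.log (q ω / (q ω + p ω)) = q ω * Real.log (q ω / (p ω + q ω))
      rw [add_comm (q ω)])
  rw [hBcongr] at hKLQ0
  have hgoal : -2 * Real.log 2 +
      2 * jsd (μ.withDensity fun ω => ENNReal.ofReal (p ω))
              (μ.withDensity fun ω => ENNReal.ofReal (q ω))
      = (∫ ω, p ω * Real.log (p ω / (p ω + q ω)) ∂μ)
        + ∫ ω, q ω * Real.log (q ω / (p ω + q ω)) ∂μ := by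
    rw [jsd, hKLP, hKLQ0]
    ring
  rw [hgoal]
  constructor
  · rintro r ⟨D, hDm, hD01, hI1, hI2, rfl⟩
    have hpt : ∀ ω, p ω * Real.log (D ω) + q ω * Real.log (1 - D ω) ≤
        p ω * Real.log (p ω / (p ω + q ω)) + q ω * Real.log (q ω / (p ω + q ω)) :=
      fun ω => aux_sup (hp0 ω) (hq0 ω) (hD01 ω).1 (hD01 ω).2
    calc ∫ ω, p ω * Real.log (D ω) ∂μ + ∫ ω, q ω * Real.log (1 - D ω) ∂μ
        = ∫ ω, (p ω * Real.log (D ω) + q ω * Real.log (1 - D ω)) ∂μ :=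
          (integral_add hI1 hI2).symm
      _ ≤ ∫ ω, (p ω * Real.log (p ω / (p ω + q ω))
            + q ω * Real.log (q ω / (p ω + q ω))) ∂μ :=
          integral_mono (hI1.add hI2) (h3.add h4) hpt
      _ = (∫ ω, p ω * Real.log (p ω / (p ω + q ω)) ∂μ)
            + ∫ ω, q ω * Real.log (q ω / (p ω + q ω)) ∂μ := integral_add h3 h4
  · intro b hb
    set A := ∫ ω, p ω * Real.log (p ω / (p ω + q ω)) ∂μ with hA
    set B := ∫ ω, q ω * Real.log (q ω / (p ω + q ω)) ∂μ with hB
    have key : ∀ t : ℝ, 0 < t → t ≤ 1 →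
        (1 - t) * (A + B) - 2 * (t * Real.log 2) ≤ b := by
      intro t ht0 ht1
      have hDm := Dfun_measurable (p := p) (q := q) hpm hqm t
      have hb1 := Dfun_bounds (p := p) (q := q) hp0 hq0 ht0 ht1
      have hI1 := Dfun_log_integrable (q := q) hpm hqm hp0 hq0 ht0 ht1 hintp
      have hI2' := Dfun_log_integrable (q := p) hqm hpm hq0 hp0 ht0 ht1 hintq
      have hfe : (fun ω => q ω * Real.log (Dfun q p t ω))
          = fun ω => q ω * Real.log (1 - Dfun p q t ω) := by
        funext ω; rw [Dfun_symm]
      have hI2 : Integrable (fun ω => q ω * Real.log (1 - Dfun p q t ω)) μ := by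
        rwa [hfe] at hI2'
      have hlow1 := Dfun_integral_bound hpm hqm hp0 hq0 ht0 ht1 hintp hp1 h3
      have hlow2 := Dfun_integral_bound hqm hpm hq0 hp0 ht0 ht1 hintq hq1 h4'
      have hic : ∫ ω, q ω * Real.log (Dfun q p t ω) ∂μ
          = ∫ ω, q ω * Real.log (1 - Dfun p q t ω) ∂μ := by rw [hfe]
      rw [hic, hBcongr] at hlow2
      have hmem := hb (Set.mem_setOf.mpr
        ⟨Dfun p q t, hDm,
          fun ω => ⟨lt_of_lt_of_le (by linarith) (hb1 ω).1,
            lt_of_le_of_lt (hb1 ω).2 (by linarith)⟩, hI1, hI2, rfl⟩)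
      linarith [hlow1, hlow2, hmem]
    by_contra hcon
    push_neg at hcon
    set ε := (A + B - b) / 2 with hε
    have hεpos : 0 < ε := by rw [hε]; linarith
    set C := A + B + 2 * Real.log 2 with hC
    set t := min 1 (ε / (|C| + 1)) with ht
    have ht0 : 0 < t := lt_min one_pos (div_pos hεpos (by positivity))
    have ht1 : t ≤ 1 := min_le_left _ _
    have hk := key t ht0 ht1
    have htC : t * C ≤ ε := by
      calc t * C ≤ t * |C| := mul_le_mul_of_nonneg_left (le_abs_self C) ht0.le
        _ ≤ (ε / (|C| + 1)) * |C| :=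
            mul_le_mul_of_nonneg_right (min_le_right _ _) (abs_nonneg C)
        _ ≤ ε := by
            rw [div_mul_eq_mul_div, div_le_iff₀ (by positivity : (0:ℝ) < |C| + 1)]
            nlinarith [abs_nonneg C, hεpos.le]
    have heq : (1 - t) * (A + B) - 2 * (t * Real.log 2) = A + B - t * C := by
      rw [hC]; ring
    rw [heq] at hk
    have : A + B ≤ b + ε := by linarith
    rw [hε] at this
    linarith
end

section
/- Let μ be a σ-finite measure on a measurable space Ω, let p : Ω → ℝ be a fixed nonnegative measurable function with ∫ p dμ = 1, and let P be the probability measure with density p with respect to μ. For a nonnegative measurable q : Ω → ℝ with ∫ q dμ = 1 and associated probability measure Q, define C(Q) = −2·log 2 + 2·JSD(P, Q). Then C(Q) ≥ −2·log 2 for every such Q, and C(Q) = −2·log 2 if and only if Q = P. That is, the GAN generator objective attains its global minimum value −2·log 2 exactly when the generated distribution recovers the true data distribution. -/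
open MeasureTheory ENNReal

lemma aux_sub_one_lt (x : ℝ) (hx : 0 ≤ x) (hne : x ≠ 1) : x - 1 < x * Real.log x := by
  rcases eq_or_lt_of_le hx with h0 | h0
  · simp [← h0]
  · have h := Real.log_lt_sub_one_of_pos (x := x⁻¹) (by positivity)
      (by simpa [inv_eq_one] using hne)
    rw [Real.log_inv] at h
    have hxi : x * x⁻¹ = 1 := mul_inv_cancel₀ h0.ne'
    nlinarith [mul_lt_mul_of_pos_left h h0]

lemma aux_sub_one_le (x : ℝ) (hx : 0 ≤ x) : x - 1 ≤ x * Real.log x := by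
  rcases eq_or_ne x 1 with rfl | h
  · simp
  · exact (aux_sub_one_lt x hx h).le

lemma aux_abs_bound (x : ℝ) (hx : 0 ≤ x) (hx2 : x ≤ 2) : |x * Real.log x| ≤ 2 := by
  rcases eq_or_lt_of_le hx with h0 | h0
  · simp [← h0]
  rcases le_or_gt x 1 with h1 | h1
  · have hlog : Real.log x ≤ 0 := Real.log_nonpos hx h1
    have h := Real.log_le_sub_one_of_pos (x := x⁻¹) (by positivity)
    rw [Real.log_inv] at h
    have hxi : x * x⁻¹ = 1 := mul_inv_cancel₀ h0.ne'
    rw [abs_of_nonpos (mul_nonpos_of_nonneg_of_nonpos hx hlog)]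
    nlinarith [mul_le_mul_of_nonneg_left h hx]
  · have hlog0 : 0 ≤ Real.log x := Real.log_nonneg h1.le
    have h := Real.log_le_sub_one_of_pos h0
    rw [abs_of_nonneg (by positivity)]
    nlinarith

lemma kl_key {Ω : Type*} [MeasurableSpace Ω] (P M : Measure Ω)
    [IsProbabilityMeasure P] [IsProbabilityMeasure M] (hPM : P ≪ M)
    (hbd : ∀ᵐ ω ∂M, P.rnDeriv M ω ≤ 2) :
    0 ≤ klDiv P M ∧ (klDiv P M = 0 ↔ P = M) := by
  set f : Ω → ℝ := fun ω => (P.rnDeriv M ω).toReal with hf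
  have hfm : Measurable f := (Measure.measurable_rnDeriv P M).ennreal_toReal
  have hf0 : ∀ ω, 0 ≤ f ω := fun ω => ENNReal.toReal_nonneg
  have hf2 : ∀ᵐ ω ∂M, f ω ≤ 2 := by
    filter_upwards [hbd] with ω h
    simpa [f] using ENNReal.toReal_mono (by norm_num) h
  have hkl : klDiv P M = ∫ ω, f ω * Real.log (f ω) ∂M := by
    rw [klDiv, ← integral_rnDeriv_smul hPM (f := fun ω => Real.log (f ω))]
    simp [f, smul_eq_mul]
  have hfint : Integrable f M := Measure.integrable_toReal_rnDeriv
  have hglint : Integrable (fun ω => f ω * Real.log (f ω)) M := by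
    refine Integrable.mono' (integrable_const (2:ℝ))
      ((hfm.mul (Real.measurable_log.comp hfm)).aestronglyMeasurable) ?_
    filter_upwards [hf2] with ω h2
    rw [Real.norm_eq_abs]; exact aux_abs_bound _ (hf0 ω) h2
  have hfint1 : ∫ ω, f ω ∂M = 1 := by
    rw [hf, Measure.integral_toReal_rnDeriv hPM, measureReal_def, measure_univ, ENNReal.toReal_one]
  set g : Ω → ℝ := fun ω => f ω * Real.log (f ω) - (f ω - 1) with hg
  have hg0 : 0 ≤ᵐ[M] g := ae_of_all _ fun ω => sub_nonneg.mpr (aux_sub_one_le _ (hf0 ω))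
  have hgint : Integrable g M := hglint.sub (hfint.sub (integrable_const 1))
  have hkg : klDiv P M = ∫ ω, g ω ∂M := by
    rw [hkl]
    have e2 : ∫ ω, (f ω - 1) ∂M = 0 := by
      rw [integral_sub hfint (integrable_const 1), hfint1]; simp
    have e1 : ∫ ω, g ω ∂M = (∫ ω, f ω * Real.log (f ω) ∂M) - ∫ ω, (f ω - 1) ∂M :=
      integral_sub hglint (hfint.sub (integrable_const 1))
    rw [e1, e2, sub_zero]
  constructor
  · rw [hkg]; exact integral_nonneg_of_ae hg0
  constructor
  · intro h0
    have hgz : g =ᵐ[M] 0 := (integral_eq_zero_iff_of_nonneg_ae hg0 hgint).mp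
      (by rw [← hkg]; exact h0)
    have hfe1 : f =ᵐ[M] fun _ => 1 := by
      filter_upwards [hgz] with ω hω
      by_contra hne
      have hlt := aux_sub_one_lt (f ω) (hf0 ω) hne
      have hω' : f ω * Real.log (f ω) - (f ω - 1) = 0 := hω
      linarith
    have hrn1 : P.rnDeriv M =ᵐ[M] fun _ => 1 := by
      filter_upwards [hfe1, hbd] with ω h1 h2
      have hne : P.rnDeriv M ω ≠ ∞ := (lt_of_le_of_lt h2 (by norm_num)).ne
      rw [← ENNReal.ofReal_toReal hne]
      simp only [hf] at h1
      rw [h1]; simp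
    calc P = M.withDensity (P.rnDeriv M) := (Measure.withDensity_rnDeriv_eq P M hPM).symm
      _ = M.withDensity 1 := withDensity_congr_ae hrn1
      _ = M := withDensity_one
  · intro h
    subst h
    rw [klDiv]
    calc ∫ ω, Real.log ((P.rnDeriv P ω).toReal) ∂P = ∫ _ω, (0:ℝ) ∂P :=
          integral_congr_ae (by filter_upwards [Measure.rnDeriv_self P] with ω hω; simp [hω])
      _ = 0 := integral_zero _ _

theorem gan_generator_objective_min
    {Ω : Type*} [MeasurableSpace Ω] (μ : Measure Ω) [SigmaFinite μ]
    (p q : Ω → ℝ) (hpm : Measurable p) (hqm : Measurable q)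
    (hp0 : ∀ ω, 0 ≤ p ω) (hq0 : ∀ ω, 0 ≤ q ω)
    (hp1 : ∫ ω, p ω ∂μ = 1) (hq1 : ∫ ω, q ω ∂μ = 1) :
    -2 * Real.log 2 ≤
      -2 * Real.log 2 +
        2 * jsd (μ.withDensity fun ω => ENNReal.ofReal (p ω))
                (μ.withDensity fun ω => ENNReal.ofReal (q ω)) ∧
    (-2 * Real.log 2 +
        2 * jsd (μ.withDensity fun ω => ENNReal.ofReal (p ω))
                (μ.withDensity fun ω => ENNReal.ofReal (q ω)) = -2 * Real.log 2 ↔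
      (μ.withDensity fun ω => ENNReal.ofReal (q ω)) =
        (μ.withDensity fun ω => ENNReal.ofReal (p ω))) := by
  set P : Measure Ω := μ.withDensity fun ω => ENNReal.ofReal (p ω) with hPdef
  set Q : Measure Ω := μ.withDensity fun ω => ENNReal.ofReal (q ω) with hQdef
  have hprob : ∀ (r : Ω → ℝ), Measurable r → (∀ ω, 0 ≤ r ω) → (∫ ω, r ω ∂μ = 1) →
      IsProbabilityMeasure (μ.withDensity fun ω => ENNReal.ofReal (r ω)) := by
    intro r hrm hr0 hr1
    have hrint : Integrable r μ := by
      by_contra h; rw [integral_undef h] at hr1; norm_num at hr1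
    constructor
    rw [withDensity_apply _ MeasurableSet.univ, setLIntegral_univ,
      ← ofReal_integral_eq_lintegral_ofReal hrint (ae_of_all _ hr0), hr1, ENNReal.ofReal_one]
  have hPprob : IsProbabilityMeasure P := hprob p hpm hp0 hp1
  have hQprob : IsProbabilityMeasure Q := hprob q hqm hq0 hq1
  set M : Measure Ω := (1 / 2 : ℝ≥0∞) • (P + Q) with hMdef
  have hMprob : IsProbabilityMeasure M := by
    constructor
    rw [hMdef, Measure.smul_apply, Measure.add_apply, measure_univ, measure_univ,
      smul_eq_mul, one_add_one_eq_two, one_div, ENNReal.inv_mul_cancel (by norm_num) (by norm_num)]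
  have hPM : P ≪ M := by
    intro s hs
    rw [hMdef, Measure.smul_apply, smul_eq_mul, Measure.add_apply] at hs
    rcases mul_eq_zero.mp hs with h | h
    · norm_num at h
    · exact (add_eq_zero.mp h).1
  have hQM : Q ≪ M := by
    intro s hs
    rw [hMdef, Measure.smul_apply, smul_eq_mul, Measure.add_apply] at hs
    rcases mul_eq_zero.mp hs with h | h
    · norm_num at h
    · exact (add_eq_zero.mp h).2
  have h2M : (2 : ℝ≥0∞) • M = P + Q := by
    rw [hMdef, smul_smul, one_div, ENNReal.mul_inv_cancel (by norm_num) (by norm_num), one_smul]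
  have hsum : ∀ᵐ ω ∂M, P.rnDeriv M ω + Q.rnDeriv M ω = 2 := by
    have h1 := Measure.rnDeriv_add P Q M
    have h2 := Measure.rnDeriv_smul_left_of_ne_top M M (r := 2) (by norm_num)
    rw [h2M] at h2
    have h3 := Measure.rnDeriv_self M
    filter_upwards [h1, h2, h3] with ω e1 e2 e3
    have e1' : (P + Q).rnDeriv M ω = P.rnDeriv M ω + Q.rnDeriv M ω := e1
    have e2' : (P + Q).rnDeriv M ω = 2 * M.rnDeriv M ω := e2
    rw [← e1', e2', e3, mul_one]
  have hbdP : ∀ᵐ ω ∂M, P.rnDeriv M ω ≤ 2 := by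
    filter_upwards [hsum] with ω h
    calc P.rnDeriv M ω ≤ P.rnDeriv M ω + Q.rnDeriv M ω := self_le_add_right _ _
      _ = 2 := h
  have hbdQ : ∀ᵐ ω ∂M, Q.rnDeriv M ω ≤ 2 := by
    filter_upwards [hsum] with ω h
    calc Q.rnDeriv M ω ≤ P.rnDeriv M ω + Q.rnDeriv M ω := self_le_add_left _ _
      _ = 2 := h
  obtain ⟨hP1, hP2⟩ := kl_key P M hPM hbdP
  obtain ⟨hQ1, hQ2⟩ := kl_key Q M hQM hbdQ
  have hjsd : jsd P Q = (1 / 2) * klDiv P M + (1 / 2) * klDiv Q M := by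
    rw [jsd, hMdef]
  refine ⟨by rw [hjsd]; linarith, ?_, ?_⟩
  · intro h
    rw [hjsd] at h
    have hkP : klDiv P M = 0 := by linarith
    have hkQ : klDiv Q M = 0 := by linarith
    rw [hQ2.mp hkQ, ← hP2.mp hkP]
  · intro h
    have hMP : M = P := by
      rw [hMdef, h, ← two_smul ℝ≥0∞ P, smul_smul, one_div,
        ENNReal.inv_mul_cancel (by norm_num) (by norm_num), one_smul]
    have hk1 : klDiv P M = 0 := hP2.mpr hMP.symm
    have hk2 : klDiv Q M = 0 := hQ2.mpr (by rw [hMP, h])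
    rw [hjsd, hk1, hk2]; ring
end
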